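/- arXiv:1807.02297 — 3 statements merged into one kernel-verified Lean document; each statement's English description precedes it below -/
import Mathlib

section
/- Let G* be the matching output by the greedy algorithm on a capacitated matching instance (which repeatedly selects the maximum-weight feasible edge, where feasibility requires each agent and each incentive to appear in at most one chosen edge and each class ξ to contain at most b_ξ chosen edges). Then for any feasible matching M* of the instance, the total weight of M* is at most 3 times the total weight of G*. -/
open Finset
open scoped Classical

/-- Feasibility for the capacitated matching problem: each agent and each
incentive appears in at most one edge, and each class `k` contributes at most
`b k` edges. -/
def Feasible {A I K : Type*} [DecidableEq A] [DecidableEq I]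
    (cl : A × I → K) (b : K → ℕ) (M : Finset (A × I)) : Prop :=
  (∀ a : A, (M.filter fun e => e.1 = a).card ≤ 1) ∧
  (∀ i : I, (M.filter fun e => e.2 = i).card ≤ 1) ∧
  (∀ k : K, (M.filter fun e => cl e = k).card ≤ b k)

/-- The greedy algorithm: process the edges in the given order (a list sorted
by decreasing weight), adding an edge whenever doing so preserves feasibility
(equivalently: it shares no endpoint with a chosen edge and its class is not
yet saturated). -/
noncomputable def greedy {A I K : Type*} [DecidableEq A] [DecidableEq I]
    (cl : A × I → K) (b : K → ℕ) (l : List (A × I)) : Finset (A × I) :=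
  l.foldl (fun M e => if Feasible cl b (insert e M) then insert e M else M) ∅

lemma feasible_mono {A I K : Type*} [DecidableEq A] [DecidableEq I]
    (cl : A × I → K) (b : K → ℕ) {S T : Finset (A × I)}
    (hST : S ⊆ T) (hT : Feasible cl b T) : Feasible cl b S := by
  obtain ⟨h1, h2, h3⟩ := hT
  exact ⟨fun a => le_trans (card_le_card (filter_subset_filter _ hST)) (h1 a),
    fun i => le_trans (card_le_card (filter_subset_filter _ hST)) (h2 i),
    fun k => le_trans (card_le_card (filter_subset_filter _ hST)) (h3 k)⟩

lemma sum_le_of_inj {E : Type*} [DecidableEq E] (w : E → ℝ) (hw : ∀ e, 0 ≤ w e)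
    (S T : Finset E) (f : E → E) (hmap : ∀ e ∈ S, f e ∈ T)
    (hinj : ∀ e ∈ S, ∀ e' ∈ S, f e = f e' → e = e')
    (hle : ∀ e ∈ S, w e ≤ w (f e)) : ∑ e ∈ S, w e ≤ ∑ g ∈ T, w g := by
  calc ∑ e ∈ S, w e ≤ ∑ e ∈ S, w (f e) := Finset.sum_le_sum hle
    _ = ∑ g ∈ S.image f, w g := (Finset.sum_image hinj).symm
    _ ≤ ∑ g ∈ T, w g := Finset.sum_le_sum_of_subset_of_nonneg
        (by intro g hg; obtain ⟨e, he, rfl⟩ := Finset.mem_image.mp hg; exact hmap e he)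
        (fun g _ _ => hw g)

lemma sum_le_of_heavier {E : Type*} [DecidableEq E] (w : E → ℝ) (hw : ∀ e, 0 ≤ w e) :
    ∀ (n : ℕ) (S T : Finset E), S.card = n →
    (∀ e ∈ S, S.card ≤ (T.filter fun g => w e ≤ w g).card) →
    ∑ e ∈ S, w e ≤ ∑ g ∈ T, w g := by
  intro n
  induction n with
  | zero =>
      intro S T hcard _
      rw [Finset.card_eq_zero.mp hcard, Finset.sum_empty]
      exact Finset.sum_nonneg fun g _ => hw g
  | succ n ih =>
      intro S T hcard hH
      have hne : S.Nonempty := Finset.card_pos.mp (by omega)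
      obtain ⟨e, heS, hemax⟩ := Finset.exists_max_image S w hne
      have hTe : (T.filter fun g => w e ≤ w g).Nonempty := by
        have := hH e heS
        exact Finset.card_pos.mp (by omega)
      obtain ⟨g, hg⟩ := hTe
      have hgT : g ∈ T := (Finset.mem_filter.mp hg).1
      have hwg : w e ≤ w g := (Finset.mem_filter.mp hg).2
      have hrec : ∑ x ∈ S.erase e, w x ≤ ∑ y ∈ T.erase g, w y := by
        apply ih
        · rw [Finset.card_erase_of_mem heS, hcard]
          omega
        · intro x hx
          have hxS : x ∈ S := Finset.mem_of_mem_erase hx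
          have h1 : g ∈ T.filter fun g' => w x ≤ w g' :=
            Finset.mem_filter.mpr ⟨hgT, le_trans (hemax x hxS) hwg⟩
          have h2 : ((T.erase g).filter fun g' => w x ≤ w g') =
              (T.filter fun g' => w x ≤ w g').erase g := by
            ext y
            simp only [Finset.mem_filter, Finset.mem_erase]
            tauto
          rw [Finset.card_erase_of_mem heS, hcard, h2,
            Finset.card_erase_of_mem h1]
          have := hH x hxS
          omega
      calc ∑ x ∈ S, w x = w e + ∑ x ∈ S.erase e, w x :=
            (Finset.add_sum_erase S w heS).symm
        _ ≤ w g + ∑ y ∈ T.erase g, w y := add_le_add hwg hrec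
        _ = ∑ y ∈ T, w y := Finset.add_sum_erase T w hgT

lemma greedy_aux {A I K : Type*} [DecidableEq A] [DecidableEq I]
    (w : A × I → ℝ) (cl : A × I → K) (b : K → ℕ) :
    ∀ (l : List (A × I)), l.Pairwise (fun e e' => w e' ≤ w e) →
    ∀ (M0 : Finset (A × I)), Feasible cl b M0 →
    (∀ g ∈ M0, ∀ e ∈ l, w e ≤ w g) →
    Feasible cl b (l.foldl (fun M e => if Feasible cl b (insert e M) then insert e M else M) M0) ∧
    M0 ⊆ l.foldl (fun M e => if Feasible cl b (insert e M) then insert e M else M) M0 ∧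
    (∀ e ∈ l, e ∉ l.foldl (fun M e => if Feasible cl b (insert e M) then insert e M else M) M0 →
      ¬ Feasible cl b (insert e ((l.foldl (fun M e => if Feasible cl b (insert e M) then insert e M else M) M0).filter (fun g => w e ≤ w g)))) := by
  intro l
  induction l with
  | nil => intro _ M0 hF _; exact ⟨hF, Finset.Subset.refl _, by simp⟩
  | cons e t ih =>
    intro hsort M0 hF hheavy
    have hsorted_t : t.Pairwise (fun e e' => w e' ≤ w e) := hsort.of_cons
    have hhead : ∀ e' ∈ t, w e' ≤ w e := fun e' h => List.rel_of_pairwise_cons hsort h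
    simp only [List.foldl_cons]
    set M1 := if Feasible cl b (insert e M0) then insert e M0 else M0 with hM1
    have hsub01 : M0 ⊆ M1 := by
      by_cases h : Feasible cl b (insert e M0) <;>
        simp [hM1, h, Finset.subset_insert]
    have hsub1i : M1 ⊆ insert e M0 := by
      by_cases h : Feasible cl b (insert e M0) <;>
        simp [hM1, h, Finset.subset_insert]
    have hF1 : Feasible cl b M1 := by
      by_cases h : Feasible cl b (insert e M0)
      · rw [hM1, if_pos h]; exact h
      · rw [hM1, if_neg h]; exact hF
    have hheavy1 : ∀ g ∈ M1, ∀ e' ∈ t, w e' ≤ w g := by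
      intro g hg e' he'
      rcases Finset.mem_insert.mp (hsub1i hg) with rfl | hgM0
      · exact hhead e' he'
      · exact hheavy g hgM0 e' (List.mem_cons_of_mem _ he')
    obtain ⟨hFG, hsubG, hblock⟩ := ih hsorted_t M1 hF1 hheavy1
    refine ⟨hFG, hsub01.trans hsubG, ?_⟩
    intro e' he' heG
    rcases List.mem_cons.mp he' with rfl | he't
    · have heM1 : e' ∉ M1 := fun h => heG (hsubG h)
      have hnF : ¬ Feasible cl b (insert e' M0) := by
        intro h
        exact heM1 (by rw [hM1, if_pos h]; exact Finset.mem_insert_self _ _)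
      intro hFeas
      apply hnF
      apply feasible_mono cl b _ hFeas
      apply Finset.insert_subset_insert
      intro g hg
      exact Finset.mem_filter.mpr
        ⟨hsubG (hsub01 hg), hheavy g hg e' List.mem_cons_self⟩
    · exact hblock e' he't heG

lemma sum_union_le {E : Type*} [DecidableEq E] (w : E → ℝ) (hw : ∀ e, 0 ≤ w e)
    (s t : Finset E) : ∑ x ∈ s ∪ t, w x ≤ ∑ x ∈ s, w x + ∑ x ∈ t, w x := by
  have h : ∑ x ∈ s ∪ t, w x + ∑ x ∈ s ∩ t, w x = ∑ x ∈ s, w x + ∑ x ∈ t, w x :=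
    Finset.sum_union_inter
  have h2 : 0 ≤ ∑ x ∈ s ∩ t, w x := Finset.sum_nonneg fun x _ => hw x
  linarith


/-- The greedy capacitated matching is a 1/3-approximation: for any feasible
matching `M*`, `Σ_{M*} w ≤ 3 Σ_{G*} w` where `G*` is the greedy output on the
edges sorted in decreasing order of weight. -/
theorem greedy_one_third_approx {A I K : Type*} [Fintype A] [Fintype I]
    [DecidableEq A] [DecidableEq I]
    (w : A × I → ℝ) (hw : ∀ e, 0 ≤ w e)
    (cl : A × I → K) (b : K → ℕ)
    (l : List (A × I)) (hnd : l.Nodup) (hall : ∀ e : A × I, e ∈ l)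
    (hsort : l.Pairwise fun e e' => w e' ≤ w e)
    (M : Finset (A × I)) (hM : Feasible cl b M) :
    ∑ e ∈ M, w e ≤ 3 * ∑ e ∈ greedy cl b l, w e := by
  have hFempty : Feasible cl b (∅ : Finset (A × I)) :=
    ⟨fun a => by simp, fun i => by simp, fun k => by simp⟩
  obtain ⟨hFG, -, hblock⟩ := greedy_aux w cl b l hsort ∅ hFempty (by simp)
  set G : Finset (A × I) := greedy cl b l with hGdef
  have hGfold : G = l.foldl (fun M e => if Feasible cl b (insert e M) then insert e M else M) ∅ := rfl
  rw [← hGfold] at hFG hblock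
  set P1 : A × I → Prop := fun e => ∃ g ∈ G, g.1 = e.1 ∧ w e ≤ w g with hP1
  set P2 : A × I → Prop := fun e => ∃ g ∈ G, g.2 = e.2 ∧ w e ≤ w g with hP2
  set P3 : A × I → Prop := fun e =>
    b (cl e) ≤ ((G.filter fun g => w e ≤ w g).filter fun g => cl g = cl e).card with hP3
  -- every edge of M is covered
  have hcover : ∀ e ∈ M, P1 e ∨ P2 e ∨ P3 e := by
    intro e _
    by_cases heG : e ∈ G
    · exact Or.inl ⟨e, heG, rfl, le_refl _⟩
    have hnF := hblock e (hall e) heG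
    set Ge : Finset (A × I) := G.filter fun g => w e ≤ w g with hGe
    have hFGe : Feasible cl b Ge := feasible_mono cl b (Finset.filter_subset _ _) hFG
    rw [Feasible, not_and_or, not_and_or] at hnF
    rcases hnF with h | h | h
    · push_neg at h
      obtain ⟨a, ha⟩ := h
      by_cases hea : e.1 = a
      · have hsub : ((insert e Ge).filter fun x => x.1 = a) ⊆
            insert e (Ge.filter fun x => x.1 = a) := by
          rw [Finset.filter_insert, if_pos hea]
        have hcard : 1 ≤ (Ge.filter fun x => x.1 = a).card := by
          have hq1 := Finset.card_le_card hsub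
          have hq2 := Finset.card_insert_le e (Ge.filter fun x => x.1 = a)
          omega
        obtain ⟨g, hg⟩ := Finset.card_pos.mp
          (show 0 < (Ge.filter fun x => x.1 = a).card by omega)
        have hgGe := (Finset.mem_filter.mp hg).1
        have hg1 : g.1 = a := (Finset.mem_filter.mp hg).2
        exact Or.inl ⟨g, (Finset.mem_filter.mp hgGe).1, by rw [hg1, hea],
          (Finset.mem_filter.mp hgGe).2⟩
      · exfalso
        rw [Finset.filter_insert, if_neg hea] at ha
        exact absurd (hFGe.1 a) (by omega)
    · push_neg at h
      obtain ⟨i, hi⟩ := h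
      by_cases hei : e.2 = i
      · have hsub : ((insert e Ge).filter fun x => x.2 = i) ⊆
            insert e (Ge.filter fun x => x.2 = i) := by
          rw [Finset.filter_insert, if_pos hei]
        have hcard : 1 ≤ (Ge.filter fun x => x.2 = i).card := by
          have hq1 := Finset.card_le_card hsub
          have hq2 := Finset.card_insert_le e (Ge.filter fun x => x.2 = i)
          omega
        obtain ⟨g, hg⟩ := Finset.card_pos.mp
          (show 0 < (Ge.filter fun x => x.2 = i).card by omega)
        have hgGe := (Finset.mem_filter.mp hg).1
        have hg2 : g.2 = i := (Finset.mem_filter.mp hg).2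
        exact Or.inr (Or.inl ⟨g, (Finset.mem_filter.mp hgGe).1, by rw [hg2, hei],
          (Finset.mem_filter.mp hgGe).2⟩)
      · exfalso
        rw [Finset.filter_insert, if_neg hei] at hi
        exact absurd (hFGe.2.1 i) (by omega)
    · push_neg at h
      obtain ⟨k, hk⟩ := h
      by_cases hek : cl e = k
      · have hsub : ((insert e Ge).filter fun x => cl x = k) ⊆
            insert e (Ge.filter fun x => cl x = k) := by
          rw [Finset.filter_insert, if_pos hek]
        have hcard : b k ≤ (Ge.filter fun x => cl x = k).card := by
          have hq1 := Finset.card_le_card hsub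
          have hq2 := Finset.card_insert_le e (Ge.filter fun x => cl x = k)
          omega
        refine Or.inr (Or.inr ?_)
        show b (cl e) ≤ _
        rw [hek]
        exact hcard
      · exfalso
        rw [Finset.filter_insert, if_neg hek] at hk
        exact absurd (hFGe.2.2 k) (by omega)
  -- bound 1
  have hB1 : ∑ e ∈ M.filter P1, w e ≤ ∑ g ∈ G, w g := by
    set f1 : A × I → A × I := fun e =>
      if h : ∃ g ∈ G, g.1 = e.1 ∧ w e ≤ w g then h.choose else e with hf1
    have hspec : ∀ e, P1 e → f1 e ∈ G ∧ (f1 e).1 = e.1 ∧ w e ≤ w (f1 e) := by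
      intro e he
      rw [hf1]
      simp only [dif_pos (show ∃ g ∈ G, g.1 = e.1 ∧ w e ≤ w g from he)]
      exact he.choose_spec
    apply sum_le_of_inj w hw _ G f1
    · intro e he
      exact (hspec e (Finset.mem_filter.mp he).2).1
    · intro e he e' he' heq
      have h1 := (hspec e (Finset.mem_filter.mp he).2).2.1
      have h2 := (hspec e' (Finset.mem_filter.mp he').2).2.1
      have h11 : e.1 = e'.1 := by rw [← h1, ← h2, heq]
      apply Finset.card_le_one.mp (hM.1 e.1)
      · exact Finset.mem_filter.mpr ⟨(Finset.mem_filter.mp he).1, rfl⟩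
      · exact Finset.mem_filter.mpr ⟨(Finset.mem_filter.mp he').1, h11.symm⟩
    · intro e he
      exact (hspec e (Finset.mem_filter.mp he).2).2.2
  -- bound 2
  have hB2 : ∑ e ∈ M.filter P2, w e ≤ ∑ g ∈ G, w g := by
    set f2 : A × I → A × I := fun e =>
      if h : ∃ g ∈ G, g.2 = e.2 ∧ w e ≤ w g then h.choose else e with hf2
    have hspec : ∀ e, P2 e → f2 e ∈ G ∧ (f2 e).2 = e.2 ∧ w e ≤ w (f2 e) := by
      intro e he
      rw [hf2]
      simp only [dif_pos (show ∃ g ∈ G, g.2 = e.2 ∧ w e ≤ w g from he)]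
      exact he.choose_spec
    apply sum_le_of_inj w hw _ G f2
    · intro e he
      exact (hspec e (Finset.mem_filter.mp he).2).1
    · intro e he e' he' heq
      have h1 := (hspec e (Finset.mem_filter.mp he).2).2.1
      have h2 := (hspec e' (Finset.mem_filter.mp he').2).2.1
      have h22 : e.2 = e'.2 := by rw [← h1, ← h2, heq]
      apply Finset.card_le_one.mp (hM.2.1 e.2)
      · exact Finset.mem_filter.mpr ⟨(Finset.mem_filter.mp he).1, rfl⟩
      · exact Finset.mem_filter.mpr ⟨(Finset.mem_filter.mp he').1, h22.symm⟩
    · intro e he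
      exact (hspec e (Finset.mem_filter.mp he).2).2.2
  -- bound 3
  have hB3 : ∑ e ∈ M.filter P3, w e ≤ ∑ g ∈ G, w g := by
    set S : Finset (A × I) := M.filter P3 with hS
    set J : Finset K := S.image cl with hJ
    have h1 : ∑ e ∈ S, w e =
        ∑ k ∈ J, ∑ e ∈ S.filter (fun e => cl e = k), w e :=
      (Finset.sum_fiberwise_of_maps_to (fun e he => Finset.mem_image_of_mem cl he) w).symm
    have h2 : ∀ k ∈ J, ∑ e ∈ S.filter (fun e => cl e = k), w e ≤
        ∑ g ∈ G.filter (fun g => cl g = k), w g := by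
      intro k _
      apply sum_le_of_heavier w hw (S.filter (fun e => cl e = k)).card _ _ rfl
      intro e he
      have heS : e ∈ S := (Finset.mem_filter.mp he).1
      have hek : cl e = k := (Finset.mem_filter.mp he).2
      have hP3e : P3 e := (Finset.mem_filter.mp heS).2
      have hc1 : (S.filter (fun e => cl e = k)).card ≤
          (M.filter (fun e => cl e = k)).card :=
        Finset.card_le_card (Finset.filter_subset_filter _ (Finset.filter_subset _ _))
      have hc2 := hM.2.2 k
      have hc3 : b k ≤ ((G.filter fun g => cl g = k).filter fun g => w e ≤ w g).card := by
        rw [Finset.filter_comm]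
        rw [hP3] at hP3e
        rw [← hek]
        exact hP3e
      omega
    have hdisj : (J : Set K).PairwiseDisjoint (fun k => G.filter fun g => cl g = k) := by
      intro k _ k' _ hne
      apply Finset.disjoint_left.mpr
      intro g hg hg'
      exact hne ((Finset.mem_filter.mp hg).2 ▸ (Finset.mem_filter.mp hg').2 ▸ rfl)
    have h3 : ∑ k ∈ J, ∑ g ∈ G.filter (fun g => cl g = k), w g ≤ ∑ g ∈ G, w g := by
      rw [← Finset.sum_biUnion hdisj]
      apply Finset.sum_le_sum_of_subset_of_nonneg
      · intro g hg
        obtain ⟨k, _, hk⟩ := Finset.mem_biUnion.mp hg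
        exact (Finset.mem_filter.mp hk).1
      · exact fun g _ _ => hw g
    calc ∑ e ∈ S, w e = _ := h1
      _ ≤ ∑ k ∈ J, ∑ g ∈ G.filter (fun g => cl g = k), w g := Finset.sum_le_sum h2
      _ ≤ ∑ g ∈ G, w g := h3
  -- combine
  have hMsub : M ⊆ (M.filter P1 ∪ M.filter P2) ∪ M.filter P3 := by
    intro e he
    rcases hcover e he with h | h | h
    · exact Finset.mem_union_left _ (Finset.mem_union_left _ (Finset.mem_filter.mpr ⟨he, h⟩))
    · exact Finset.mem_union_left _ (Finset.mem_union_right _ (Finset.mem_filter.mpr ⟨he, h⟩))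
    · exact Finset.mem_union_right _ (Finset.mem_filter.mpr ⟨he, h⟩)
  have hmain : ∑ e ∈ M, w e ≤
      ∑ e ∈ M.filter P1, w e + ∑ e ∈ M.filter P2, w e + ∑ e ∈ M.filter P3, w e := by
    calc ∑ e ∈ M, w e ≤ ∑ e ∈ (M.filter P1 ∪ M.filter P2) ∪ M.filter P3, w e :=
          Finset.sum_le_sum_of_subset_of_nonneg hMsub (fun e _ _ => hw e)
      _ ≤ ∑ e ∈ M.filter P1 ∪ M.filter P2, w e + ∑ e ∈ M.filter P3, w e :=
          sum_union_le w hw _ _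
      _ ≤ ∑ e ∈ M.filter P1, w e + ∑ e ∈ M.filter P2, w e + ∑ e ∈ M.filter P3, w e := by
          have := sum_union_le w hw (M.filter P1) (M.filter P2)
          linarith
  linarith
end

section
/- In the charging argument for the greedy capacitated matching: if an edge (a,i) ∈ M* of class ξ is removed by the greedy algorithm because the capacity b_ξ of its class was already saturated, then w(a,i) ≤ (1/b_ξ) · Σ_{(a',i') ∈ G* ∩ ξ} w(a',i'). Consequently, summing over all such edges of M*, their total weight is at most Σ_{e ∈ G*} w(e). -/
open Finset
open scoped Classical

/-- Charging argument, class-saturation case.  Let `M₂ ⊆ M` consist of edges of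
the feasible matching `M` that were removed because their class was saturated:
the greedy output contains exactly `b (cl e)` edges of class `cl e`, each of
weight at least `w e`.  Then every `e ∈ M₂` satisfies
`w e ≤ (1/b_{cl e}) Σ_{e' ∈ G* ∩ cl e} w e'`, and summing,
`Σ_{M₂} w ≤ Σ_{G*} w`. -/
theorem greedy_class_charging {A I K : Type*} [Fintype A] [Fintype I]
    [DecidableEq A] [DecidableEq I] [DecidableEq K]
    (w : A × I → ℝ) (hw : ∀ e, 0 ≤ w e)
    (cl : A × I → K) (b : K → ℕ)
    (l : List (A × I)) (hnd : l.Nodup) (hall : ∀ e : A × I, e ∈ l)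
    (hsort : l.Pairwise fun e e' => w e' ≤ w e)
    (M : Finset (A × I)) (hM : Feasible cl b M)
    (M₂ : Finset (A × I)) (hM₂ : M₂ ⊆ M)
    (hb : ∀ e ∈ M₂, 0 < b (cl e))
    (hsat : ∀ e ∈ M₂,
      ((greedy cl b l).filter fun e' => cl e' = cl e).card = b (cl e) ∧
      ∀ e' ∈ greedy cl b l, cl e' = cl e → w e ≤ w e') :
    (∀ e ∈ M₂, w e ≤ (1 / (b (cl e) : ℝ)) *
        ∑ e' ∈ (greedy cl b l).filter fun e' => cl e' = cl e, w e') ∧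
    ∑ e ∈ M₂, w e ≤ ∑ e ∈ greedy cl b l, w e := by
  set G := greedy cl b l with hG
  have hpart1 : ∀ e ∈ M₂, w e ≤ (1 / (b (cl e) : ℝ)) *
      ∑ e' ∈ G.filter fun e' => cl e' = cl e, w e' := by
    intro e he
    obtain ⟨hcard, hge⟩ := hsat e he
    have hbpos : (0:ℝ) < b (cl e) := by exact_mod_cast hb e he
    rw [one_div, inv_mul_eq_div, le_div_iff₀ hbpos]
    calc w e * b (cl e) = ∑ _e' ∈ G.filter fun e' => cl e' = cl e, w e := by
          rw [Finset.sum_const, hcard, nsmul_eq_mul]; ring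
      _ ≤ _ := Finset.sum_le_sum (fun e' he' => by
          simp only [Finset.mem_filter] at he'
          exact hge e' he'.1 he'.2)
  refine ⟨hpart1, ?_⟩
  have key : ∀ k ∈ M₂.image cl, ∑ e ∈ M₂.filter (fun e => cl e = k), w e ≤
      ∑ e ∈ G.filter (fun e => cl e = k), w e := by
    intro k hk
    obtain ⟨e₀, he₀, hk0⟩ := Finset.mem_image.mp hk
    have hbpos : (0:ℝ) < b k := by
      subst hk0; exact_mod_cast hb e₀ he₀
    have hSnn : 0 ≤ ∑ e ∈ G.filter (fun e => cl e = k), w e :=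
      Finset.sum_nonneg fun e _ => hw e
    have hbound : ∀ e ∈ M₂.filter (fun e => cl e = k),
        w e ≤ (1 / (b k : ℝ)) * ∑ e' ∈ G.filter (fun e' => cl e' = k), w e' := by
      intro e he
      simp only [Finset.mem_filter] at he
      have := hpart1 e he.1
      rw [he.2] at this
      exact this
    have hcardle : (((M₂.filter (fun e => cl e = k)).card : ℝ)) ≤ b k := by
      have h1 : (M₂.filter (fun e => cl e = k)).card ≤ (M.filter (fun e => cl e = k)).card :=
        Finset.card_le_card (Finset.filter_subset_filter _ hM₂)
      have h2 : (M.filter (fun e => cl e = k)).card ≤ b k := by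
        convert hM.2.2 k using 2
        congr!
      exact_mod_cast h1.trans h2
    calc ∑ e ∈ M₂.filter (fun e => cl e = k), w e
        ≤ ∑ _e ∈ M₂.filter (fun e => cl e = k),
            (1 / (b k : ℝ)) * ∑ e' ∈ G.filter (fun e' => cl e' = k), w e' :=
          Finset.sum_le_sum hbound
      _ = ((M₂.filter (fun e => cl e = k)).card : ℝ) *
            ((1 / (b k : ℝ)) * ∑ e' ∈ G.filter (fun e' => cl e' = k), w e') := by
          rw [Finset.sum_const, nsmul_eq_mul]
      _ ≤ (b k : ℝ) * ((1 / (b k : ℝ)) * ∑ e' ∈ G.filter (fun e' => cl e' = k), w e') :=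
          mul_le_mul_of_nonneg_right hcardle
            (mul_nonneg (by positivity) hSnn)
      _ = _ := by field_simp
  calc ∑ e ∈ M₂, w e
      = ∑ k ∈ M₂.image cl, ∑ e ∈ M₂.filter (fun e => cl e = k), w e := by
        rw [Finset.sum_fiberwise_of_maps_to (fun x hx => Finset.mem_image_of_mem cl hx)]
    _ ≤ ∑ k ∈ M₂.image cl, ∑ e ∈ G.filter (fun e => cl e = k), w e :=
        Finset.sum_le_sum key
    _ = ∑ e ∈ G.filter (fun e => cl e ∈ M₂.image cl), w e := by
        rw [Finset.sum_fiberwise_eq_sum_filter]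
    _ ≤ ∑ e ∈ G, w e :=
        Finset.sum_le_sum_of_subset_of_nonneg (Finset.filter_subset _ _)
          (fun e he _ => hw e)
end

section
/- Let G* = {g*_1, ..., g*_m} be the greedy matching on weights w, ordered so that w(g*_1) ≥ ... ≥ w(g*_m), and let L_j be the marginal infeasibility sets (L_1 = H_1 and L_j = H_j \ H_{j-1}, where H_j is the set of edges infeasible when added to {g*_1,...,g*_j}). Then the sets L_1, ..., L_m are pairwise disjoint, their union equals P \ G*, and for every edge (a,i) ∈ L_j one has w(g*_j) ≥ w(a,i). -/
open Finset
open scoped Classical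

/-- The greedy algorithm, returning the selected edges as a list in selection
order (decreasing weight). -/
noncomputable def greedyList {A I K : Type*} [DecidableEq A] [DecidableEq I]
    (cl : A × I → K) (b : K → ℕ) (l : List (A × I)) : List (A × I) :=
  l.foldl (fun M e =>
    if Feasible cl b (insert e M.toFinset) then M ++ [e] else M) []

/-- `infeasibleSet cl b l gl j` is the set `H_j`: edges (not among the first
`j` greedy edges) whose addition to the first `j` greedy edges violates
feasibility. -/
def infeasibleSet {A I K : Type*} [DecidableEq A] [DecidableEq I]
    (cl : A × I → K) (b : K → ℕ) (l : List (A × I)) (gl : List (A × I))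
    (j : ℕ) : Set (A × I) :=
  {e | e ∈ l ∧ e ∉ gl.take j ∧ ¬ Feasible cl b (insert e (gl.take j).toFinset)}

section Aux
variable {A I K : Type*} [DecidableEq A] [DecidableEq I]
variable (cl : A × I → K) (b : K → ℕ)

noncomputable def gstep (M : List (A × I)) (e : A × I) : List (A × I) :=
  if Feasible cl b (insert e M.toFinset) then M ++ [e] else M

lemma greedyList_eq (l : List (A × I)) :
    greedyList cl b l = l.foldl (gstep cl b) [] := rfl

lemma feasible_mono_s3 {M N : Finset (A × I)} (h : M ⊆ N) (hN : Feasible cl b N) :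
    Feasible cl b M := by
  obtain ⟨h1, h2, h3⟩ := hN
  refine ⟨fun a => le_trans ?_ (h1 a), fun i => le_trans ?_ (h2 i),
    fun k => le_trans ?_ (h3 k)⟩ <;>
    exact Finset.card_le_card (Finset.filter_subset_filter _ h)

lemma feasible_singleton (hb : ∀ k, 1 ≤ b k) (e : A × I) :
    Feasible cl b {e} := by
  refine ⟨fun a => ?_, fun i => ?_, fun k => le_trans ?_ (hb k)⟩ <;>
    exact le_trans (Finset.card_le_card (Finset.filter_subset _ _)) (by simp)

lemma foldl_gstep_eq (acc : List (A × I)) (l : List (A × I)) :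
    ∃ s, l.foldl (gstep cl b) acc = acc ++ s ∧ s.Sublist l := by
  induction l generalizing acc with
  | nil => exact ⟨[], by simp⟩
  | cons x t ih =>
    rw [List.foldl_cons]
    by_cases hF : Feasible cl b (insert x acc.toFinset)
    · have hg : gstep cl b acc x = acc ++ [x] := if_pos hF
      obtain ⟨s, hs, hsub⟩ := ih (acc ++ [x])
      exact ⟨x :: s, by rw [hg, hs]; simp, hsub.cons₂ x⟩
    · have hg : gstep cl b acc x = acc := if_neg hF
      obtain ⟨s, hs, hsub⟩ := ih acc
      exact ⟨s, by rw [hg, hs], hsub.cons x⟩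

lemma prefix_foldl (acc l : List (A × I)) :
    acc <+: l.foldl (gstep cl b) acc := by
  obtain ⟨s, hs, -⟩ := foldl_gstep_eq cl b acc l
  exact ⟨s, hs.symm⟩

lemma mem_foldl {x : A × I} {acc l : List (A × I)}
    (h : x ∈ l.foldl (gstep cl b) acc) : x ∈ acc ∨ x ∈ l := by
  obtain ⟨s, hs, hsub⟩ := foldl_gstep_eq cl b acc l
  rw [hs, List.mem_append] at h
  exact h.imp id (fun hx => hsub.subset hx)

end Aux

section Aux2
variable {A I K : Type*} [DecidableEq A] [DecidableEq I]
variable (cl : A × I → K) (b : K → ℕ)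

lemma take_of_prefix {α : Type*} {p r : List α} (h : p <+: r) {j : ℕ}
    (hj : j ≤ p.length) : r.take j = p.take j := by
  obtain ⟨s, rfl⟩ := h
  rw [List.take_append, Nat.sub_eq_zero_of_le hj]
  simp

lemma feasible_get (l : List (A × I)) :
    ∀ (acc : List (A × I)) (j : ℕ), acc.length ≤ j →
    ∀ (h : j < (l.foldl (gstep cl b) acc).length),
    Feasible cl b (insert ((l.foldl (gstep cl b) acc)[j])
      (((l.foldl (gstep cl b) acc).take j).toFinset)) := by
  induction l with
  | nil => intro acc j hj h; simp only [List.foldl_nil] at h; omega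
  | cons x t ih =>
    intro acc j hj h
    simp only [List.foldl_cons] at h ⊢
    by_cases hF : Feasible cl b (insert x acc.toFinset)
    · have hg : gstep cl b acc x = acc ++ [x] := if_pos hF
      simp only [hg] at h ⊢
      rcases Nat.lt_or_ge j (acc.length + 1) with hlt | hge
      · have hj' : j = acc.length := by omega
        subst hj'
        have hp := prefix_foldl cl b (acc ++ [x]) t
        have e2 : (t.foldl (gstep cl b) (acc ++ [x]))[acc.length]'h = x := by
          rw [← hp.getElem (by simp)]
          simp
        have e1 : (t.foldl (gstep cl b) (acc ++ [x])).take acc.length = acc := by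
          rw [take_of_prefix hp (by simp)]
          simp
        rw [e2, e1]
        exact hF
      · exact ih (acc ++ [x]) j (by simpa using hge) h
    · have hg : gstep cl b acc x = acc := if_neg hF
      simp only [hg] at h ⊢
      exact ih acc j hj h

lemma greedy_processed {l l1 l2 : List (A × I)} {e : A × I}
    (hl : l = l1 ++ e :: l2) (he : e ∉ l.foldl (gstep cl b) []) :
    (l1.foldl (gstep cl b) []) <+: l.foldl (gstep cl b) [] ∧
    ¬ Feasible cl b (insert e (l1.foldl (gstep cl b) []).toFinset) := by
  subst hl
  rw [List.foldl_append, List.foldl_cons] at he ⊢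
  set M1 := l1.foldl (gstep cl b) [] with hM1
  by_cases hF : Feasible cl b (insert e M1.toFinset)
  · have hg : gstep cl b M1 e = M1 ++ [e] := if_pos hF
    rw [hg] at he
    exact absurd ((prefix_foldl cl b _ l2).subset (by simp)) he
  · have hg : gstep cl b M1 e = M1 := if_neg hF
    rw [hg] at he ⊢
    exact ⟨prefix_foldl cl b M1 l2, hF⟩

lemma exists_transition {P : ℕ → Prop} :
    ∀ m, ¬ P 0 → P m → ∃ j, j < m ∧ ¬ P j ∧ P (j + 1) := by
  intro m
  induction m with
  | zero => intro h0 hm; exact absurd hm h0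
  | succ n ih =>
    intro h0 hm
    by_cases hn : P n
    · obtain ⟨j, hj, h⟩ := ih h0 hn; exact ⟨j, by omega, h⟩
    · exact ⟨n, by omega, hn, hm⟩

end Aux2

/-- Properties of the marginal infeasibility sets `L_j = H_j \ H_{j-1}` of the
greedy matching `G* = [g*_1, …, g*_m]` (ordered by decreasing weight): they are
pairwise disjoint, their union is `P \ G*`, and each `e ∈ L_j` has
`w e ≤ w g*_j`. -/
theorem marginal_infeasibility_sets {A I K : Type*} [Fintype A] [Fintype I]
    [DecidableEq A] [DecidableEq I]
    (w : A × I → ℝ)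
    (cl : A × I → K) (b : K → ℕ) (hb : ∀ k, 1 ≤ b k)
    (l : List (A × I)) (hnd : l.Nodup) (hall : ∀ e : A × I, e ∈ l)
    (hsort : l.Pairwise fun e e' => w e' ≤ w e) :
    let gl := greedyList cl b l
    let H := infeasibleSet cl b l gl
    let L : Fin gl.length → Set (A × I) := fun j => H (j.1 + 1) \ H j.1
    (∀ j j' : Fin gl.length, j ≠ j' → Disjoint (L j) (L j')) ∧
    (⋃ j : Fin gl.length, L j) = {e : A × I | e ∈ l ∧ e ∉ gl} ∧
    (∀ j : Fin gl.length, ∀ e ∈ L j, w e ≤ w (gl.get j)) := by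
  intro gl H L
  have hgl : gl = l.foldl (gstep cl b) [] := rfl
  have tsub : ∀ {p q : List (A × I)}, p <+: q → p.toFinset ⊆ q.toFinset := by
    intro p q h x hx
    rw [List.mem_toFinset] at hx ⊢
    exact h.subset hx
  -- greedy state feasibility
  have hget : ∀ (j : ℕ) (h : j < gl.length),
      Feasible cl b (insert (gl[j]'h) ((gl.take j).toFinset)) :=
    fun j hj => feasible_get cl b l [] j (by simp) hj
  have hHdef : ∀ (j : ℕ) (e : A × I), e ∈ H j ↔
      (e ∈ l ∧ e ∉ gl.take j ∧ ¬ Feasible cl b (insert e (gl.take j).toFinset)) :=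
    fun j e => Iff.rfl
  -- members of H (j+1) with j < gl.length are not selected
  have hnotmem : ∀ (e : A × I) (j : ℕ), j < gl.length → e ∈ H (j + 1) → e ∉ gl := by
    intro e j hj he hmem
    obtain ⟨he1, he2, he3⟩ := (hHdef _ e).mp he
    obtain ⟨k, hk, hke⟩ := List.getElem_of_mem hmem
    have hkj : j + 1 ≤ k := by
      by_contra hc
      push_neg at hc
      exact he2 (List.mem_take_iff_getElem.mpr ⟨k, lt_min_iff.mpr ⟨hc, hk⟩, hke⟩)
    have hf := hget k hk
    rw [hke] at hf
    exact he3 (feasible_mono_s3 cl b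
      (Finset.insert_subset_insert _ (tsub (List.take_prefix_take_left (l := gl) hkj))) hf)
  -- the chain property
  have hmono : ∀ j : ℕ, H j ⊆ H (j + 1) := by
    intro j e he
    obtain ⟨he1, he2, he3⟩ := (hHdef _ e).mp he
    have htsub : (gl.take j).toFinset ⊆ (gl.take (j + 1)).toFinset :=
      tsub (List.take_prefix_take_left (l := gl) (Nat.le_succ j))
    refine (hHdef _ e).mpr ⟨he1, ?_,
      fun hf => he3 (feasible_mono_s3 cl b (Finset.insert_subset_insert _ htsub) hf)⟩
    intro hmem
    obtain ⟨i, hi, hie⟩ := List.mem_take_iff_getElem.mp hmem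
    have hi1 : i < j + 1 := lt_of_lt_of_le hi (min_le_left _ _)
    have hil : i < gl.length := lt_of_lt_of_le hi (min_le_right _ _)
    rcases Nat.lt_or_ge i j with hij | hij
    · exact he2 (List.mem_take_iff_getElem.mpr ⟨i, lt_min_iff.mpr ⟨hij, hil⟩, hie⟩)
    · have hij' : i = j := by omega
      subst hij'
      have := hget i hil
      rw [hie] at this
      exact he3 this
  have hmono' : ∀ j j' : ℕ, j ≤ j' → H j ⊆ H j' := by
    intro j j' hle
    induction j', hle using Nat.le_induction with
    | base => exact subset_rfl
    | succ n hn ih => exact ih.trans (hmono n)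
  -- H 0 is empty
  have hH0 : ∀ e : A × I, e ∉ H 0 := by
    intro e he
    obtain ⟨-, -, he3⟩ := (hHdef 0 e).mp he
    refine he3 ?_
    simp only [List.take_zero, List.toFinset_nil, insert_empty_eq]
    exact feasible_singleton cl b hb e
  -- unselected elements are in H gl.length
  have hHm : ∀ e : A × I, e ∈ l → e ∉ gl → e ∈ H gl.length := by
    intro e hel hng
    obtain ⟨l1, l2, hldec⟩ := List.append_of_mem hel
    have hng' : e ∉ l.foldl (gstep cl b) [] := hgl ▸ hng
    obtain ⟨hpre, hnf⟩ := greedy_processed cl b hldec hng'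
    refine (hHdef _ e).mpr ⟨hel, by simpa using hng, fun hf => hnf ?_⟩
    have hsubM : (l1.foldl (gstep cl b) []).toFinset ⊆ gl.toFinset :=
      tsub (by rw [hgl]; exact hpre)
    have hf' : Feasible cl b (insert e gl.toFinset) := by simpa using hf
    exact feasible_mono_s3 cl b (Finset.insert_subset_insert _ hsubM) hf'
  refine ⟨?_, ?_, ?_⟩
  · -- disjointness
    have key : ∀ j j' : Fin gl.length, j < j' → Disjoint (L j) (L j') := by
      intro j j' hlt
      rw [Set.disjoint_left]
      intro e hej hej'
      exact hej'.2 (hmono' (j.1 + 1) j'.1 hlt hej.1)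
    intro j j' hne
    rcases lt_or_gt_of_ne hne with h | h
    · exact key j j' h
    · exact (key j' j h).symm
  · -- union
    ext e
    simp only [Set.mem_iUnion, Set.mem_setOf_eq]
    constructor
    · rintro ⟨j, hej⟩
      exact ⟨((hHdef _ e).mp hej.1).1, hnotmem e j.1 j.2 hej.1⟩
    · rintro ⟨hel, hng⟩
      have h0 : ¬ e ∈ H 0 := hH0 e
      have hm : e ∈ H gl.length := hHm e hel hng
      obtain ⟨j, hj, hnPj, hPj⟩ := exists_transition (P := fun n => e ∈ H n) gl.length h0 hm
      exact ⟨⟨j, hj⟩, hPj, hnPj⟩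
  · -- weights
    intro j e he
    obtain ⟨he1, he2⟩ := he
    have hel : e ∈ l := ((hHdef _ e).mp he1).1
    have hng : e ∉ gl := hnotmem e j.1 j.2 he1
    have hnt : e ∉ gl.take j.1 := fun hm => ((hHdef _ e).mp he1).2.1
      ((List.take_prefix_take_left (l := gl) (Nat.le_succ j.1)).subset hm)
    have hfeas : Feasible cl b (insert e (gl.take j.1).toFinset) := by
      by_contra hc
      exact he2 ((hHdef _ e).mpr ⟨hel, hnt, hc⟩)
    by_contra hw
    push_neg at hw
    set g : A × I := gl.get j with hgdef
    have hgl2 : g ∈ l := hall g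
    obtain ⟨ke, hke, hkee⟩ := List.getElem_of_mem hel
    set l1 := l.take ke with hl1
    set l2 := l.drop (ke + 1) with hl2
    have hldec : l = l1 ++ e :: l2 := by
      conv_lhs => rw [← List.take_append_drop ke l, List.drop_eq_getElem_cons hke, hkee]
    have hgnl1 : g ∉ l1 := by
      intro hg1
      obtain ⟨i, hi, hig⟩ := List.getElem_of_mem hg1
      have hiike : i < ke := lt_of_lt_of_le hi (by simp [hl1])
      have hrel := hsort.rel_get_of_lt
        (a := ⟨i, lt_trans hiike hke⟩) (b := ⟨ke, hke⟩) hiike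
      simp only [List.get_eq_getElem] at hrel
      rw [hkee] at hrel
      rw [show l1[i] = l[i]'(lt_trans hiike hke) from List.getElem_take] at hig
      rw [hig] at hrel
      exact absurd hrel (not_le.mpr hw)
    have hgne : g ≠ e := fun hq => absurd hw (by rw [hq]; exact lt_irrefl _)
    have hng' : e ∉ l.foldl (gstep cl b) [] := hgl ▸ hng
    obtain ⟨hpre, hnf⟩ := greedy_processed cl b hldec hng'
    set M1 := l1.foldl (gstep cl b) [] with hM1
    have hpre' : M1 <+: gl := by rw [hgl]; exact hpre
    have hgnM1 : g ∉ M1 := by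
      intro hgm
      rcases mem_foldl cl b hgm with h | h
      · simp at h
      · exact hgnl1 h
    have hlen : M1.length ≤ j.1 := by
      by_contra hc
      push_neg at hc
      refine hgnM1 ?_
      have : M1[j.1]'hc = gl[j.1]'j.2 := hpre'.getElem hc
      rw [hgdef, List.get_eq_getElem, ← this]
      exact List.getElem_mem _
    have hM1take : M1 <+: gl.take j.1 := by
      rw [List.prefix_iff_eq_take.mp hpre']
      exact List.take_prefix_take_left (l := gl) hlen
    exact hnf (feasible_mono_s3 cl b (Finset.insert_subset_insert _ (tsub hM1take)) hfeas)
end
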